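/- Let G be a finite simple graph and let δ be a k-sparse distribution of G. Then G has a δ-flow f that is edge-bounded by k. -/

import Mathlib

namespace SparseFlowAux

variable {α : Type*}

lemma ite_or_split (P Q : Prop) [Decidable P] [Decidable Q] (h : ¬(P ∧ Q)) :
    (if P ∨ Q then (1 : ℤ) else 0) = (if P then 1 else 0) + (if Q then 1 else 0) := by
  by_cases hP : P <;> by_cases hQ : Q
  · exact absurd ⟨hP, hQ⟩ h
  all_goals simp [hP, hQ]

lemma getLast_cons_cons (a b : α) (l : List α) :
    (a :: b :: l).getLast (by simp) = (b :: l).getLast (by simp) :=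
  List.getLast_cons (by simp)

lemma exists_nodup_chain {r : α → α → Prop} :
    ∀ (n : ℕ) (l : List α), l.length ≤ n → ∀ (a : α), List.Chain r a l →
      ∃ l' : List α, List.Chain r a l' ∧
        (a :: l').getLast (by simp) = (a :: l).getLast (by simp) ∧
        (a :: l').Nodup ∧ l' ⊆ l := by
  intro n
  induction n with
  | zero =>
    intro l hl a _
    have hnil : l = [] := List.length_eq_zero_iff.mp (Nat.le_zero.mp hl)
    subst hnil
    exact ⟨[], List.Chain.nil, rfl, by simp, by simp⟩
  | succ n ih =>
    intro l hl a hc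
    by_cases ha : a ∈ l
    · obtain ⟨l₁, l₂, rfl⟩ := List.append_of_mem ha
      have hsuf : (a :: l₂) <:+ (a :: (l₁ ++ a :: l₂)) := ⟨a :: l₁, by simp⟩
      have hc' : List.Chain' r (a :: (l₁ ++ a :: l₂)) := hc
      have hc₂ : List.Chain r a l₂ := hc'.suffix hsuf
      have hlen : l₂.length ≤ n := by
        simp only [List.length_append, List.length_cons] at hl; omega
      obtain ⟨l', h1, h2, h3, h4⟩ := ih l₂ hlen a hc₂
      refine ⟨l', h1, ?_, h3, fun x hx => by simp [h4 hx]⟩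
      rw [h2]
      show (a :: l₂).getLast (by simp) = ((a :: l₁) ++ (a :: l₂)).getLast (by simp)
      rw [List.getLast_append]
      simp
    · cases l with
      | nil => exact ⟨[], List.Chain.nil, rfl, by simp, by simp⟩
      | cons c t =>
        replace hc := List.chain_cons.mp hc
        have hlen : t.length ≤ n := by simp at hl; omega
        obtain ⟨l', h1, h2, h3, h4⟩ := ih t hlen c hc.2
        have hcl : c :: l' ⊆ c :: t := List.cons_subset_cons c h4
        refine ⟨c :: l', List.chain_cons.mpr ⟨hc.1, h1⟩, ?_, ?_, hcl⟩
        · exact (getLast_cons_cons a c l').trans (h2.trans (getLast_cons_cons a c t).symm)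
        · exact List.nodup_cons.mpr ⟨fun hmem => ha (hcl hmem), h3⟩

lemma chain_zip_mem {r : α → α → Prop} :
    ∀ (l : List α) (a : α), List.Chain r a l →
      ∀ x y : α, (x, y) ∈ (a :: l).zip l → r x y := by
  intro l
  induction l with
  | nil => simp
  | cons c t ih =>
    intro a hc x y hxy
    replace hc := List.chain_cons.mp hc
    rw [List.zip_cons_cons, List.mem_cons] at hxy
    rcases hxy with h | h
    · obtain ⟨rfl, rfl⟩ : x = a ∧ y = c := by simpa [Prod.ext_iff] using h
      exact hc.1
    · exact ih c hc.2 x y h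

lemma zip_no_rev :
    ∀ (l : List α) (a : α), (a :: l).Nodup →
      ∀ x y : α, (x, y) ∈ (a :: l).zip l → (y, x) ∈ (a :: l).zip l → False := by
  intro l
  induction l with
  | nil => simp
  | cons c t ih =>
    intro a hnd x y h1 h2
    have hna : a ∉ c :: t := (List.nodup_cons.mp hnd).1
    have hnd' : (c :: t).Nodup := (List.nodup_cons.mp hnd).2
    rw [List.zip_cons_cons, List.mem_cons] at h1 h2
    rcases h1 with h1 | h1 <;> rcases h2 with h2 | h2
    · rw [Prod.mk.injEq] at h1 h2
      obtain ⟨rfl, rfl⟩ := h1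
      exact hna (by rw [← h2.1]; exact List.mem_cons_self)
    · rw [Prod.mk.injEq] at h1
      obtain ⟨rfl, rfl⟩ := h1
      exact hna (List.mem_cons_of_mem _ (List.of_mem_zip h2).2)
    · rw [Prod.mk.injEq] at h2
      obtain ⟨rfl, rfl⟩ := h2
      exact hna (List.mem_cons_of_mem _ (List.of_mem_zip h1).2)
    · exact ih c hnd' x y h1 h2

lemma sum_path_flow [Fintype α] [DecidableEq α] :
    ∀ (l : List α) (a : α), (a :: l).Nodup → ∀ v : α,
      (∑ w : α, ((if (v, w) ∈ (a :: l).zip l then (1 : ℤ) else 0) -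
        (if (w, v) ∈ (a :: l).zip l then (1 : ℤ) else 0))) =
      (if v = a then 1 else 0) - (if v = (a :: l).getLast (by simp) then 1 else 0) := by
  intro l
  induction l with
  | nil =>
    intro a _ v
    show (∑ w : α, ((if (v, w) ∈ ([] : List (α × α)) then (1 : ℤ) else 0) -
      (if (w, v) ∈ ([] : List (α × α)) then (1 : ℤ) else 0))) =
      (if v = a then 1 else 0) - (if v = a then 1 else 0)
    simp
  | cons c t ih =>
    intro a hnd v
    have hna : a ∉ c :: t := (List.nodup_cons.mp hnd).1
    have hnd' : (c :: t).Nodup := (List.nodup_cons.mp hnd).2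
    have key : ∀ w : α,
        ((if (v, w) ∈ (a :: c :: t).zip (c :: t) then (1 : ℤ) else 0) -
          (if (w, v) ∈ (a :: c :: t).zip (c :: t) then (1 : ℤ) else 0)) =
        (((if (v, w) = (a, c) then (1 : ℤ) else 0) - (if (w, v) = (a, c) then (1 : ℤ) else 0)) +
          ((if (v, w) ∈ (c :: t).zip t then (1 : ℤ) else 0) -
            (if (w, v) ∈ (c :: t).zip t then (1 : ℤ) else 0))) := by
      intro w
      have hPQ : ¬((v, w) = (a, c) ∧ (v, w) ∈ (c :: t).zip t) := by
        rintro ⟨h1, h2⟩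
        rw [Prod.mk.injEq] at h1
        exact hna (h1.1 ▸ (List.of_mem_zip h2).1)
      have hPQ' : ¬((w, v) = (a, c) ∧ (w, v) ∈ (c :: t).zip t) := by
        rintro ⟨h1, h2⟩
        rw [Prod.mk.injEq] at h1
        exact hna (h1.1 ▸ (List.of_mem_zip h2).1)
      have e : ∀ x y : α, (if (x, y) ∈ (a :: c :: t).zip (c :: t) then (1 : ℤ) else 0) =
          (if ((x, y) = (a, c) ∨ (x, y) ∈ (c :: t).zip t) then (1 : ℤ) else 0) :=
        fun x y => if_congr (by rw [List.zip_cons_cons, List.mem_cons]) rfl rfl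
      rw [e v w, e w v, ite_or_split _ _ hPQ, ite_or_split _ _ hPQ']
      ring
    rw [Finset.sum_congr rfl (fun w _ => key w), Finset.sum_add_distrib]
    have s1 : (∑ w : α, ((if (v, w) = (a, c) then (1 : ℤ) else 0) -
        (if (w, v) = (a, c) then (1 : ℤ) else 0))) =
        (if v = a then 1 else 0) - (if v = c then 1 else 0) := by
      rw [Finset.sum_sub_distrib]
      congr 1
      · rcases eq_or_ne v a with rfl | h
        · simp [Prod.ext_iff, Finset.sum_ite_eq']
        · simp [Prod.ext_iff, h]
      · rcases eq_or_ne v c with rfl | h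
        · simp [Prod.ext_iff, Finset.sum_ite_eq']
        · simp [Prod.ext_iff, h]
    rw [s1, ih c hnd' v,
      show (a :: c :: t).getLast (by simp) = (c :: t).getLast (by simp) from
        getLast_cons_cons a c t]
    ring


theorem aux {V : Type*} [Fintype V] [DecidableEq V] (G : SimpleGraph V) [DecidableRel G.Adj]
    (k : ℕ) :
    ∀ (N : ℕ) (δ : V → ℕ), (∑ v, δ v) = N →
    (∀ Z : Finset V, (∑ v ∈ Z, (δ v : ℤ)) ≤ (Z.card : ℤ) +
        (k : ℤ) * ((Finset.univ.filter
          (fun p : V × V => G.Adj p.1 p.2 ∧ p.1 ∉ Z ∧ p.2 ∈ Z)).card : ℤ)) →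
    ∃ f : V → V → ℤ,
      (∀ u v, f u v = -f v u) ∧
      (∀ u v, f u v ≠ 0 → G.Adj u v) ∧
      (∀ v, (∑ u, f v u) = (δ v : ℤ) - 1 ∨ (δ v = 0 ∧ (∑ u, f v u) = 0)) ∧
      (∀ u v, |f u v| ≤ (k : ℤ)) := by
  intro N
  induction N using Nat.strong_induction_on with
  | _ N ih =>
  intro δ hN hsp
  classical
  by_cases hbig : ∃ v₀, 2 ≤ δ v₀
  case neg =>
    push_neg at hbig
    refine ⟨fun _ _ => 0, by simp, by simp, ?_, by simp⟩
    intro v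
    have := hbig v
    interval_cases h : δ v
    · exact Or.inr ⟨rfl, by simp⟩
    · exact Or.inl (by simp)
  case pos =>
  obtain ⟨v₀, hv₀⟩ := hbig
  set δ' : V → ℕ := Function.update δ v₀ (δ v₀ - 1) with hδ'def
  have hδ'v₀ : δ' v₀ = δ v₀ - 1 := Function.update_self _ _ _
  have hδ'ne : ∀ v, v ≠ v₀ → δ' v = δ v := fun v hv => Function.update_of_ne hv _ _
  have hupd : ∀ v, δ' v ≤ δ v := by
    intro v
    by_cases h : v = v₀
    · subst h; rw [hδ'v₀]; omega
    · rw [hδ'ne v h]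
  have hNbig : δ v₀ ≤ N := hN ▸ Finset.single_le_sum (fun i _ => Nat.zero_le _) (Finset.mem_univ v₀)
  have hsum' : ∑ v, δ' v = N - 1 := by
    have h1 : ∑ v, δ' v = (δ v₀ - 1) + ∑ v ∈ Finset.univ \ {v₀}, δ v :=
      Finset.sum_update_of_mem (Finset.mem_univ v₀) δ (δ v₀ - 1)
    have h2 : δ v₀ + ∑ v ∈ Finset.univ.erase v₀, δ v = ∑ v, δ v :=
      Finset.add_sum_erase _ δ (Finset.mem_univ v₀)
    rw [Finset.sdiff_singleton_eq_erase] at h1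
    omega
  have hsp' : ∀ Z : Finset V, (∑ v ∈ Z, (δ' v : ℤ)) ≤ (Z.card : ℤ) +
      (k : ℤ) * ((Finset.univ.filter
        (fun p : V × V => G.Adj p.1 p.2 ∧ p.1 ∉ Z ∧ p.2 ∈ Z)).card : ℤ) :=
    fun Z => le_trans (Finset.sum_le_sum fun v _ => Int.ofNat_le.mpr (hupd v)) (hsp Z)
  obtain ⟨g, hg1, hg2, hg3, hg4⟩ := ih (N - 1) (by omega) δ' hsum' hsp'
  set r : V → V → Prop := fun u w => G.Adj u w ∧ g u w < k with hrdef
  set R : Set V := {w | Relation.ReflTransGen r v₀ w} with hRdef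
  by_cases hsink : ∃ u, u ∈ R ∧ δ u = 0 ∧ (∑ w, g u w) = 0
  · -- augmenting path
    obtain ⟨u, huR, huδ, hud⟩ := hsink
    obtain ⟨l₀, hl₀c, hl₀last⟩ := List.exists_isChain_cons_of_relationReflTransGen huR
    obtain ⟨l, hlc, hllast, hlnd, hlsub⟩ :=
      exists_nodup_chain l₀.length l₀ le_rfl v₀ hl₀c
    have hlast : (v₀ :: l).getLast (by simp) = u := hllast.trans hl₀last
    have hv₀u : v₀ ≠ u := fun h => by rw [h, huδ] at hv₀; omega
    set zl := (v₀ :: l).zip l with hzldef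
    have hzadj : ∀ x y, (x, y) ∈ zl → G.Adj x y ∧ g x y < k :=
      fun x y h => chain_zip_mem l v₀ hlc x y h
    refine ⟨fun x y => g x y +
      ((if (x, y) ∈ zl then (1 : ℤ) else 0) - (if (y, x) ∈ zl then (1 : ℤ) else 0)),
      ?_, ?_, ?_, ?_⟩
    · intro x y; dsimp only; rw [hg1 x y]; ring
    · intro x y hxy
      dsimp only at hxy
      by_contra hadj
      apply hxy
      have hg0 : g x y = 0 := by
        by_contra h; exact hadj (hg2 x y h)
      have m1 : (x, y) ∉ zl := fun hm => hadj (hzadj x y hm).1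
      have m2 : (y, x) ∉ zl := fun hm => hadj ((hzadj y x hm).1.symm)
      simp [hg0, m1, m2]
    · intro v
      dsimp only
      have hpath := sum_path_flow l v₀ hlnd v
      rw [hlast] at hpath
      have htot : (∑ w, (g v w +
          ((if (v, w) ∈ zl then (1 : ℤ) else 0) - (if (w, v) ∈ zl then (1 : ℤ) else 0)))) =
          (∑ w, g v w) + ((if v = v₀ then 1 else 0) - (if v = u then 1 else 0)) := by
        rw [Finset.sum_add_distrib, hpath]
      rw [htot]
      by_cases hvv : v = v₀
      · subst hvv
        left
        rcases hg3 v with hd | ⟨h0, _⟩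
        · rw [hd, hδ'v₀, if_pos rfl, if_neg hv₀u]
          have : ((δ v - 1 : ℕ) : ℤ) = (δ v : ℤ) - 1 := by
            rw [Nat.cast_sub (by omega)]; simp
          rw [this]; ring
        · rw [hδ'v₀] at h0; omega
      · by_cases hvu : v = u
        · subst hvu
          left
          rw [hud, huδ, if_neg hvv, if_pos rfl]
          simp
        · rw [if_neg hvv, if_neg hvu]
          rcases hg3 v with hd | ⟨h0, hd⟩
          · left; rw [hd, hδ'ne v hvv]; ring
          · right; rw [← hδ'ne v hvv]; exact ⟨h0, by rw [hd]; ring⟩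
    · intro x y
      dsimp only
      have hb := abs_le.mp (hg4 x y)
      rw [abs_le]
      by_cases m1 : (x, y) ∈ zl
      · have hr : g x y < k := (hzadj x y m1).2
        have m2 : (y, x) ∉ zl := fun hm => zip_no_rev l v₀ hlnd x y m1 hm
        rw [if_pos m1, if_neg m2]
        omega
      · by_cases m2 : (y, x) ∈ zl
        · have hr : g y x < k := (hzadj y x m2).2
          have hxy : g x y = -g y x := hg1 x y
          rw [if_neg m1, if_pos m2]
          omega
        · rw [if_neg m1, if_neg m2]
          omega
  · -- no augmenting path: contradiction with sparsity
    exfalso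
    set Zs : Finset V := Finset.univ.filter (fun w => w ∈ R) with hZsdef
    have hmemZs : ∀ w, w ∈ Zs ↔ Relation.ReflTransGen r v₀ w := by
      intro w; simp [hZsdef, hRdef]
    have hv₀Z : v₀ ∈ Zs := (hmemZs v₀).mpr Relation.ReflTransGen.refl
    have hdef : ∀ w ∈ Zs, (∑ x, g w x) = (δ' w : ℤ) - 1 := by
      intro w hw
      rcases hg3 w with h | ⟨h0, hd⟩
      · exact h
      · exfalso
        have hwv₀ : w ≠ v₀ := by
          intro he; subst he; rw [hδ'v₀] at h0; omega
        exact hsink ⟨w, (hmemZs w).mp hw, by rw [← hδ'ne w hwv₀]; exact h0, hd⟩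
    have hinner : ∑ w ∈ Zs, ∑ x ∈ Zs, g w x = 0 := by
      have h1 : ∑ w ∈ Zs, ∑ x ∈ Zs, g w x = ∑ x ∈ Zs, ∑ w ∈ Zs, g w x := Finset.sum_comm
      have h2 : ∑ x ∈ Zs, ∑ w ∈ Zs, g w x = -(∑ x ∈ Zs, ∑ w ∈ Zs, g x w) := by
        rw [← Finset.sum_neg_distrib]
        refine Finset.sum_congr rfl fun x _ => ?_
        rw [← Finset.sum_neg_distrib]
        exact Finset.sum_congr rfl fun w _ => by rw [hg1 w x]
      linarith [h1, h2]
    have hsplit : ∑ w ∈ Zs, ∑ x, g w x = ∑ w ∈ Zs, ∑ x ∈ Zsᶜ, g w x := by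
      calc ∑ w ∈ Zs, ∑ x, g w x
          = ∑ w ∈ Zs, (∑ x ∈ Zs, g w x + ∑ x ∈ Zsᶜ, g w x) :=
            Finset.sum_congr rfl fun w _ => (Finset.sum_add_sum_compl Zs _).symm
        _ = ∑ w ∈ Zs, ∑ x ∈ Zs, g w x + ∑ w ∈ Zs, ∑ x ∈ Zsᶜ, g w x := Finset.sum_add_distrib
        _ = ∑ w ∈ Zs, ∑ x ∈ Zsᶜ, g w x := by rw [hinner, zero_add]
    have hval : ∀ w ∈ Zs, ∀ x ∈ Zsᶜ, g w x = if G.Adj w x then (k : ℤ) else 0 := by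
      intro w hw x hx
      rw [Finset.mem_compl] at hx
      by_cases hadj : G.Adj w x
      · rw [if_pos hadj]
        have hnr : ¬ g w x < (k : ℤ) := fun hlt =>
          hx ((hmemZs x).mpr (((hmemZs w).mp hw).tail ⟨hadj, hlt⟩))
        have := abs_le.mp (hg4 w x)
        omega
      · rw [if_neg hadj]
        by_contra h
        exact hadj (hg2 w x h)
    have hcard : ((Zs ×ˢ Zsᶜ).filter (fun p : V × V => G.Adj p.1 p.2)).card =
        ((Finset.univ.filter
          (fun p : V × V => G.Adj p.1 p.2 ∧ p.1 ∉ Zs ∧ p.2 ∈ Zs)).card) := by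
      refine Finset.card_nbij' Prod.swap Prod.swap ?_ ?_ ?_ ?_
      · intro p hp
        simp only [Finset.mem_coe, Finset.mem_filter, Finset.mem_product, Finset.mem_compl,
          Finset.mem_univ, true_and, Prod.fst_swap, Prod.snd_swap] at hp ⊢
        exact ⟨hp.2.symm, hp.1.2, hp.1.1⟩
      · intro p hp
        simp only [Finset.mem_coe, Finset.mem_filter, Finset.mem_product, Finset.mem_compl,
          Finset.mem_univ, true_and, Prod.fst_swap, Prod.snd_swap] at hp ⊢
        exact ⟨⟨hp.2.2, hp.2.1⟩, hp.1.symm⟩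
      · intro p _; simp
      · intro p _; simp
    have hB : ∑ w ∈ Zs, ∑ x ∈ Zsᶜ, g w x =
        (k : ℤ) * ((Finset.univ.filter
          (fun p : V × V => G.Adj p.1 p.2 ∧ p.1 ∉ Zs ∧ p.2 ∈ Zs)).card : ℤ) := by
      have e1 : ∑ w ∈ Zs, ∑ x ∈ Zsᶜ, g w x =
          ∑ w ∈ Zs, ∑ x ∈ Zsᶜ, (if G.Adj w x then (k : ℤ) else 0) :=
        Finset.sum_congr rfl fun w hw => Finset.sum_congr rfl fun x hx => hval w hw x hx
      rw [e1, ← Finset.sum_product', ← Finset.sum_filter, Finset.sum_const, ← hcard]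
      rw [nsmul_eq_mul, mul_comm]
    have hδsum : ∑ w ∈ Zs, (δ' w : ℤ) = (∑ w ∈ Zs, (δ w : ℤ)) - 1 := by
      have hpt : ∀ w, (δ w : ℤ) - (δ' w : ℤ) = if w = v₀ then 1 else 0 := by
        intro w
        by_cases h : w = v₀
        · subst h
          rw [if_pos rfl, hδ'v₀, Nat.cast_sub (by omega)]
          ring
        · rw [if_neg h, hδ'ne w h]; ring
      have : ∑ w ∈ Zs, ((δ w : ℤ) - (δ' w : ℤ)) = 1 := by
        rw [Finset.sum_congr rfl fun w _ => hpt w, Finset.sum_ite_eq' Zs v₀ fun _ => (1 : ℤ),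
          if_pos hv₀Z]
      rw [Finset.sum_sub_distrib] at this
      linarith
    have hLHS : ∑ w ∈ Zs, ∑ x, g w x = (∑ w ∈ Zs, (δ w : ℤ)) - 1 - (Zs.card : ℤ) := by
      rw [Finset.sum_congr rfl hdef, Finset.sum_sub_distrib, Finset.sum_const, hδsum]
      ring
    have := hsp Zs
    rw [hsplit, hB] at hLHS
    linarith

end SparseFlowAux

/-- Every finite simple graph `G` with a `k`-sparse distribution `δ` has a `δ`-flow
that is edge-bounded by `k`. -/
theorem finite_sparse_distribution_has_flow {V : Type*} [Fintype V] (G : SimpleGraph V)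
    (k : ℕ) (δ : V → ℕ)
    (hsparse : ∀ Z : Finset V,
      (∑ v ∈ Z, (δ v : ℕ∞)) ≤ (Z.card : ℕ∞) +
        (k : ℕ∞) * {p : V × V | G.Adj p.1 p.2 ∧ p.1 ∉ Z ∧ p.2 ∈ Z}.encard) :
    ∃ f : V → V → ℤ,
      (∀ u v : V, f u v = -f v u) ∧
      (∀ u v : V, f u v ≠ 0 → G.Adj u v) ∧
      (∀ v : V, {u : V | f v u ≠ 0}.Finite) ∧
      (∀ v : V, (∑ᶠ u : V, f v u) = (δ v : ℤ) - 1 ∨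
        (δ v = 0 ∧ (∑ᶠ u : V, f v u) = 0)) ∧
      ∀ u v : V, |f u v| ≤ (k : ℤ) := by
  classical
  have hsp' : ∀ Z : Finset V, (∑ v ∈ Z, (δ v : ℤ)) ≤ (Z.card : ℤ) +
      (k : ℤ) * ((Finset.univ.filter
        (fun p : V × V => G.Adj p.1 p.2 ∧ p.1 ∉ Z ∧ p.2 ∈ Z)).card : ℤ) := by
    intro Z
    have h := hsparse Z
    have hfin : {p : V × V | G.Adj p.1 p.2 ∧ p.1 ∉ Z ∧ p.2 ∈ Z}.Finite := Set.toFinite _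
    rw [hfin.encard_eq_coe_toFinset_card] at h
    have hset : hfin.toFinset =
        Finset.univ.filter (fun p : V × V => G.Adj p.1 p.2 ∧ p.1 ∉ Z ∧ p.2 ∈ Z) := by
      ext p; simp [Set.Finite.mem_toFinset]
    rw [hset] at h
    have h' : (∑ v ∈ Z, δ v : ℕ) ≤ Z.card + k * (Finset.univ.filter
        (fun p : V × V => G.Adj p.1 p.2 ∧ p.1 ∉ Z ∧ p.2 ∈ Z)).card := by
      have h2 : ((∑ v ∈ Z, δ v : ℕ) : ℕ∞) ≤ ((Z.card + k * (Finset.univ.filter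
          (fun p : V × V => G.Adj p.1 p.2 ∧ p.1 ∉ Z ∧ p.2 ∈ Z)).card : ℕ) : ℕ∞) := by
        push_cast
        exact h
      exact_mod_cast h2
    exact_mod_cast h'
  obtain ⟨f, h1, h2, h3, h4⟩ := SparseFlowAux.aux G k (∑ v, δ v) δ rfl hsp'
  refine ⟨f, h1, h2, fun v => Set.toFinite _, ?_, h4⟩
  intro v
  rw [finsum_eq_sum_of_fintype]
  exact h3 v
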